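/- For every n ≥ 1 and every 0 ≤ k < n, the number of 321-avoiding involutions of {1,...,n} with exactly k descents equals C(⌈n/2⌉, k) · C(⌊n/2⌋, k). -/

import Mathlib

open Finset Polynomial

/-- π is an involution. -/
def isInvolution {n : ℕ} (π : Equiv.Perm (Fin n)) : Prop := ∀ i, π (π i) = i

instance {n : ℕ} (π : Equiv.Perm (Fin n)) : Decidable (isInvolution π) := by
  unfold isInvolution; infer_instance

/-- π avoids the pattern 321: no i < j < k with π(i) > π(j) > π(k). -/
def avoids321 {n : ℕ} (π : Equiv.Perm (Fin n)) : Prop :=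
  ¬ ∃ i j k : Fin n, i < j ∧ j < k ∧ π k < π j ∧ π j < π i

instance {n : ℕ} (π : Equiv.Perm (Fin n)) : Decidable (avoids321 π) := by
  unfold avoids321; infer_instance

/-- The descent set of π, with positions 1,…,n-1 (position i is a descent when
the entry in position i exceeds the entry in position i+1; entries are 0-indexed
internally). -/
def desSet {n : ℕ} (π : Equiv.Perm (Fin n)) : Finset ℕ :=
  (Finset.Ico 1 n).filter (fun i =>
    ∃ h : i < n, π ⟨i, h⟩ < π ⟨i - 1, Nat.lt_of_le_of_lt (Nat.sub_le i 1) h⟩)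

/-- The major index: the sum of the descent positions. -/
def maj {n : ℕ} (π : Equiv.Perm (Fin n)) : ℕ := ∑ i ∈ desSet π, i


open Finset

namespace W321

/-- number of positions `i < j` carrying letter `c` -/
def cnt {n : ℕ} (w : Fin n → Fin 3) (c : Fin 3) (j : ℕ) : ℕ :=
  ((univ : Finset (Fin n)).filter fun i => i.val < j ∧ w i = c).card

lemma cnt_mono {n : ℕ} (w : Fin n → Fin 3) (c : Fin 3) : Monotone (cnt w c) := by
  intro j j' hj
  apply Finset.card_le_card
  intro i hi
  simp only [mem_filter] at *
  exact ⟨hi.1, lt_of_lt_of_le hi.2.1 hj, hi.2.2⟩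

lemma cnt_succ_of_lt {n : ℕ} (w : Fin n → Fin 3) (c : Fin 3) {j : ℕ} (hj : j < n) :
    cnt w c (j+1) = cnt w c j + if w ⟨j, hj⟩ = c then 1 else 0 := by
  classical
  unfold cnt
  have hsplit : ((univ : Finset (Fin n)).filter fun i => i.val < j + 1 ∧ w i = c)
      = ((univ : Finset (Fin n)).filter fun i => i.val < j ∧ w i = c)
        ∪ ((univ : Finset (Fin n)).filter fun i => i = ⟨j, hj⟩ ∧ w i = c) := by
    ext i
    simp only [mem_filter, mem_univ, true_and, mem_union, Fin.ext_iff]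
    constructor
    · rintro ⟨h1, h2⟩
      rcases Nat.lt_succ_iff_lt_or_eq.mp h1 with h | h
      · exact Or.inl ⟨h, h2⟩
      · exact Or.inr ⟨h, h2⟩
    · rintro (⟨h1, h2⟩ | ⟨h1, h2⟩)
      · exact ⟨Nat.lt_succ_of_lt h1, h2⟩
      · exact ⟨by omega, h2⟩
  rw [hsplit, card_union_of_disjoint]
  · congr 1
    split
    · next h =>
      rw [Finset.card_eq_one]
      refine ⟨⟨j, hj⟩, ?_⟩
      ext i
      simp only [mem_filter, mem_univ, true_and, mem_singleton]
      constructor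
      · rintro ⟨rfl, _⟩; rfl
      · rintro rfl; exact ⟨rfl, h⟩
    · next h =>
      rw [Finset.card_eq_zero]
      ext i
      simp only [mem_filter, mem_univ, true_and, notMem_empty, iff_false, not_and]
      rintro rfl; exact h
  · rw [Finset.disjoint_left]
    intro i hi hi'
    simp only [mem_filter] at hi hi'
    have := hi.2.1
    rw [hi'.2.1] at this
    simp at this

lemma cnt_stable {n : ℕ} (w : Fin n → Fin 3) (c : Fin 3) {j : ℕ} (hj : n ≤ j) :
    cnt w c j = cnt w c n := by
  unfold cnt
  congr 1
  apply Finset.filter_congr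
  intro i _
  constructor
  · rintro ⟨_, h⟩; exact ⟨i.isLt, h⟩
  · rintro ⟨_, h⟩; exact ⟨lt_of_lt_of_le i.isLt hj, h⟩

lemma cnt_zero {n : ℕ} (w : Fin n → Fin 3) (c : Fin 3) : cnt w c 0 = 0 := by
  unfold cnt
  rw [Finset.card_eq_zero]
  ext i; simp

/-- `cnt` at a value `j` equals the number of elements of the letter-class below `j`. -/
lemma cnt_eq_filter_card {n : ℕ} (w : Fin n → Fin 3) (c : Fin 3) (j : ℕ) :
    cnt w c j = (((univ : Finset (Fin n)).filter fun i => w i = c).filter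
      fun i => i.val < j).card := by
  unfold cnt
  rw [Finset.filter_filter]
  congr 1
  apply Finset.filter_congr
  intro i _
  simp [and_comm]

/-- the card of elements of `s` below the `r`-th element of `s` is `r`. -/
lemma card_filter_lt_orderEmbOfFin {n m : ℕ} (s : Finset (Fin n)) (h : s.card = m) (r : Fin m) :
    (s.filter fun y => y.val < ((s.orderEmbOfFin h r : Fin n) : ℕ)).card = r := by
  classical
  have himg : s.filter (fun y => y.val < ((s.orderEmbOfFin h r : Fin n) : ℕ))
      = (univ.filter (· < r)).image (s.orderEmbOfFin h) := by
    ext y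
    simp only [mem_filter, mem_image, mem_univ, true_and]
    constructor
    · rintro ⟨hy, hlt⟩
      have : y ∈ Set.range (s.orderEmbOfFin h) := by
        rw [Finset.range_orderEmbOfFin]; exact hy
      obtain ⟨r', rfl⟩ := this
      refine ⟨r', ?_, rfl⟩
      by_contra hc
      push_neg at hc
      have := (s.orderEmbOfFin h).monotone hc
      have : ((s.orderEmbOfFin h r : Fin n) : ℕ) ≤ ((s.orderEmbOfFin h r' : Fin n) : ℕ) := this
      omega
    · rintro ⟨r', hr', rfl⟩
      refine ⟨Finset.orderEmbOfFin_mem s h r', ?_⟩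
      have := (s.orderEmbOfFin h).strictMono hr'
      exact this
  rw [himg, Finset.card_image_of_injective _ (s.orderEmbOfFin h).injective]
  have : (univ.filter (· < r)) = Finset.Iio r := by ext y; simp
  rw [this, Fin.card_Iio]


/-- the letter class -/
def lset {n : ℕ} (w : Fin n → Fin 3) (c : Fin 3) : Finset (Fin n) :=
  (univ : Finset (Fin n)).filter fun i => w i = c

lemma cnt_eq_lset_card {n : ℕ} (w : Fin n → Fin 3) (c : Fin 3) {j : ℕ} (hj : n ≤ j) :
    cnt w c j = (lset w c).card := by
  have h2 : ((univ.filter fun i => w i = c).filter fun i => i.val < n) = lset w c := by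
    rw [lset, Finset.filter_true_of_mem]
    intro i _; exact i.isLt
  rw [cnt_stable w c hj, cnt_eq_filter_card, h2]

lemma cnt_succ_self {n : ℕ} (w : Fin n → Fin 3) (c : Fin 3) (x : Fin n) :
    cnt w c (x.val + 1) = cnt w c x.val + if w x = c then 1 else 0 := by
  have := cnt_succ_of_lt w c x.isLt
  exact this

lemma rank_lt_card {n : ℕ} {w : Fin n → Fin 3} {c : Fin 3} {x : Fin n} (hx : w x = c) :
    cnt w c x.val < (lset w c).card := by
  have h1 : cnt w c (x.val + 1) = cnt w c x.val + 1 := by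
    rw [cnt_succ_self, if_pos hx]
  have h2 : cnt w c (x.val + 1) ≤ (lset w c).card := by
    rw [← cnt_eq_lset_card w c (le_refl n)]
    exact cnt_mono w c x.isLt
  omega

lemma cnt_emb {n m : ℕ} (w : Fin n → Fin 3) (c : Fin 3) (h : (lset w c).card = m) (r : Fin m) :
    cnt w c ((lset w c).orderEmbOfFin h r).val = r := by
  rw [cnt_eq_filter_card]
  exact card_filter_lt_orderEmbOfFin (lset w c) h r

lemma w_emb {n m : ℕ} (w : Fin n → Fin 3) (c : Fin 3) (h : (lset w c).card = m) (r : Fin m) :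
    w ((lset w c).orderEmbOfFin h r) = c := by
  have := Finset.orderEmbOfFin_mem (lset w c) h r
  simp only [lset, Finset.mem_filter] at this
  exact this.2

lemma emb_lt_of_cnt_gt {n m : ℕ} (w : Fin n → Fin 3) (c : Fin 3) (h : (lset w c).card = m)
    (r : Fin m) {j : ℕ} (hj : r.val < cnt w c j) :
    ((lset w c).orderEmbOfFin h r).val < j := by
  by_contra hc
  push_neg at hc
  have := cnt_mono w c hc
  rw [cnt_emb w c h r] at this
  omega

lemma emb_rank' {n m : ℕ} {w : Fin n → Fin 3} {c : Fin 3} {x : Fin n} (hx : w x = c)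
    (h : (lset w c).card = m) (v : ℕ) (p : v < m) (e : v = cnt w c x.val) :
    (lset w c).orderEmbOfFin h ⟨v, p⟩ = x := by
  have hxm : x ∈ lset w c := by simp [lset, hx]
  have hrange : x ∈ Set.range ((lset w c).orderEmbOfFin h) := by
    rw [Finset.range_orderEmbOfFin]; exact hxm
  obtain ⟨r, hr⟩ := hrange
  have hcnt : cnt w c x.val = r := by rw [← hr]; exact cnt_emb w c h r
  have : (⟨v, p⟩ : Fin m) = r := by apply Fin.ext; simp only [Fin.val_mk]; rw [e, hcnt]
  rw [this, hr]

lemma emb_rank {n m : ℕ} {w : Fin n → Fin 3} {c : Fin 3} {x : Fin n} (hx : w x = c)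
    (h : (lset w c).card = m) (p : cnt w c x.val < m) :
    (lset w c).orderEmbOfFin h ⟨cnt w c x.val, p⟩ = x :=
  emb_rank' hx h _ p rfl

/-- validity of a word: prefix counts of `b` never exceed those of `a`, and fixed letters
occur only at balanced positions. -/
def Valid {n : ℕ} (w : Fin n → Fin 3) : Prop :=
  (∀ j ≤ n, cnt w 1 j ≤ cnt w 0 j) ∧ ∀ i : Fin n, w i = 2 → cnt w 0 i.val = cnt w 1 i.val

/-- the word is balanced overall -/
def Bal {n : ℕ} (w : Fin n → Fin 3) : Prop := cnt w 0 n = cnt w 1 n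

instance {n : ℕ} (w : Fin n → Fin 3) : Decidable (Valid w) := by unfold Valid; infer_instance
instance {n : ℕ} (w : Fin n → Fin 3) : Decidable (Bal w) := by unfold Bal; infer_instance

lemma Valid.le {n : ℕ} {w : Fin n → Fin 3} (hv : Valid w) (j : ℕ) :
    cnt w 1 j ≤ cnt w 0 j := by
  rcases le_or_gt j n with h | h
  · exact hv.1 j h
  · rw [cnt_stable w 1 h.le, cnt_stable w 0 h.le]
    exact hv.1 n le_rfl

lemma Bal.card_eq {n : ℕ} {w : Fin n → Fin 3} (hb : Bal w) :
    (lset w 1).card = (lset w 0).card := by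
  rw [← cnt_eq_lset_card w 1 le_rfl, ← cnt_eq_lset_card w 0 le_rfl]
  exact hb.symm

/-- the involution associated to a valid balanced word: the `r`-th `a` is transposed
with the `r`-th `b`, other points fixed. -/
def mkfun {n : ℕ} (w : Fin n → Fin 3) (hB : (lset w 1).card = (lset w 0).card) :
    Fin n → Fin n := fun x =>
  if hx : w x = 0 then (lset w 1).orderEmbOfFin hB ⟨cnt w 0 x.val, rank_lt_card hx⟩
  else if hx' : w x = 1 then
    (lset w 0).orderEmbOfFin rfl ⟨cnt w 1 x.val, lt_of_lt_of_eq (rank_lt_card hx') hB⟩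
  else x

lemma fin3_cases (v : Fin 3) : v = 0 ∨ v = 1 ∨ v = 2 := by revert v; decide

lemma mkfun_a {n : ℕ} {w : Fin n → Fin 3} (hB : (lset w 1).card = (lset w 0).card)
    {x : Fin n} (hx : w x = 0) :
    mkfun w hB x = (lset w 1).orderEmbOfFin hB ⟨cnt w 0 x.val, rank_lt_card hx⟩ := by
  unfold mkfun; rw [dif_pos hx]

lemma mkfun_b {n : ℕ} {w : Fin n → Fin 3} (hB : (lset w 1).card = (lset w 0).card)
    {x : Fin n} (hx : w x = 1) :
    mkfun w hB x = (lset w 0).orderEmbOfFin rfl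
      ⟨cnt w 1 x.val, lt_of_lt_of_eq (rank_lt_card hx) hB⟩ := by
  unfold mkfun
  rw [dif_neg (by rw [hx]; decide), dif_pos hx]

lemma mkfun_f {n : ℕ} {w : Fin n → Fin 3} (hB : (lset w 1).card = (lset w 0).card)
    {x : Fin n} (hx : w x = 2) :
    mkfun w hB x = x := by
  unfold mkfun
  rw [dif_neg (by rw [hx]; decide), dif_neg (by rw [hx]; decide)]

lemma mkfun_invol {n : ℕ} (w : Fin n → Fin 3) (hB : (lset w 1).card = (lset w 0).card) :
    Function.Involutive (mkfun w hB) := by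
  intro x
  rcases fin3_cases (w x) with hx | hx | hx
  · rw [mkfun_a hB hx]
    have hy : w ((lset w 1).orderEmbOfFin hB ⟨cnt w 0 x.val, rank_lt_card hx⟩) = 1 :=
      w_emb w 1 hB _
    rw [mkfun_b hB hy]
    exact emb_rank' hx rfl _ _ (by rw [cnt_emb w 1 hB])
  · rw [mkfun_b hB hx]
    have hy : w ((lset w 0).orderEmbOfFin rfl
        ⟨cnt w 1 x.val, lt_of_lt_of_eq (rank_lt_card hx) hB⟩) = 0 := w_emb w 0 rfl _
    rw [mkfun_a hB hy]
    exact emb_rank' hx hB _ _ (by rw [cnt_emb w 0 rfl])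
  · rw [mkfun_f hB hx, mkfun_f hB hx]

lemma embA_lt_embB {n : ℕ} {w : Fin n → Fin 3} (hv : Valid w)
    (hB : (lset w 1).card = (lset w 0).card) (r : Fin (lset w 0).card) :
    ((lset w 0).orderEmbOfFin rfl r).val < ((lset w 1).orderEmbOfFin hB r).val := by
  set b := (lset w 1).orderEmbOfFin hB r with hbdef
  have hwb : w b = 1 := w_emb w 1 hB r
  have h1 : cnt w 1 (b.val + 1) = cnt w 1 b.val + 1 := by
    rw [cnt_succ_self, if_pos hwb]
  have h2 : cnt w 0 (b.val + 1) = cnt w 0 b.val := by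
    rw [cnt_succ_self, if_neg (by rw [hwb]; decide), add_zero]
  have h3 : cnt w 1 b.val = r := cnt_emb w 1 hB r
  have h4 := hv.le (b.val + 1)
  exact emb_lt_of_cnt_gt w 0 rfl r (by omega)

lemma lt_mk_a {n : ℕ} {w : Fin n → Fin 3} (hv : Valid w)
    (hB : (lset w 1).card = (lset w 0).card) {x : Fin n} (hx : w x = 0) :
    x < mkfun w hB x := by
  rw [mkfun_a hB hx, Fin.lt_def]
  have := embA_lt_embB hv hB ⟨cnt w 0 x.val, rank_lt_card hx⟩
  rwa [emb_rank hx rfl] at this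

lemma mk_b_lt {n : ℕ} {w : Fin n → Fin 3} (hv : Valid w)
    (hB : (lset w 1).card = (lset w 0).card) {x : Fin n} (hx : w x = 1) :
    mkfun w hB x < x := by
  rw [mkfun_b hB hx, Fin.lt_def]
  have := embA_lt_embB hv hB ⟨cnt w 1 x.val, lt_of_lt_of_eq (rank_lt_card hx) hB⟩
  rwa [emb_rank hx hB] at this

lemma mk_mono_a {n : ℕ} {w : Fin n → Fin 3} (hB : (lset w 1).card = (lset w 0).card)
    {x y : Fin n} (hx : w x = 0) (hy : w y = 0) (hxy : x ≤ y) :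
    mkfun w hB x ≤ mkfun w hB y := by
  rw [mkfun_a hB hx, mkfun_a hB hy]
  exact ((lset w 1).orderEmbOfFin hB).monotone
    (by rw [Fin.mk_le_mk]; exact cnt_mono w 0 (by exact hxy))

lemma mk_mono_b {n : ℕ} {w : Fin n → Fin 3} (hB : (lset w 1).card = (lset w 0).card)
    {x y : Fin n} (hx : w x = 1) (hy : w y = 1) (hxy : x ≤ y) :
    mkfun w hB x ≤ mkfun w hB y := by
  rw [mkfun_b hB hx, mkfun_b hB hy]
  exact ((lset w 0).orderEmbOfFin rfl).monotone
    (by rw [Fin.mk_le_mk]; exact cnt_mono w 1 (by exact hxy))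

lemma mk_a_lt_f {n : ℕ} {w : Fin n → Fin 3} (hv : Valid w)
    (hB : (lset w 1).card = (lset w 0).card) {x y : Fin n} (hx : w x = 0) (hy : w y = 2)
    (hxy : x < y) : mkfun w hB x < y := by
  rw [mkfun_a hB hx, Fin.lt_def]
  apply emb_lt_of_cnt_gt w 1 hB
  have h1 : cnt w 0 y.val = cnt w 1 y.val := hv.2 y hy
  have h2 : cnt w 0 (x.val + 1) = cnt w 0 x.val + 1 := by rw [cnt_succ_self, if_pos hx]
  have h3 : cnt w 0 (x.val + 1) ≤ cnt w 0 y.val := cnt_mono w 0 (by omega)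
  simp only [Fin.val_mk]
  omega

/-- the permutation associated to a balanced word -/
def mkperm {n : ℕ} (w : Fin n → Fin 3) (hB : (lset w 1).card = (lset w 0).card) :
    Equiv.Perm (Fin n) :=
  Function.Involutive.toPerm (mkfun w hB) (mkfun_invol w hB)

lemma mkperm_apply {n : ℕ} (w : Fin n → Fin 3) (hB : (lset w 1).card = (lset w 0).card)
    (x : Fin n) : mkperm w hB x = mkfun w hB x := rfl

lemma mkperm_isInvolution {n : ℕ} (w : Fin n → Fin 3)
    (hB : (lset w 1).card = (lset w 0).card) : isInvolution (mkperm w hB) :=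
  fun x => mkfun_invol w hB x

lemma mkperm_avoids {n : ℕ} {w : Fin n → Fin 3} (hv : Valid w)
    (hB : (lset w 1).card = (lset w 0).card) : avoids321 (mkperm w hB) := by
  rintro ⟨i, j, k, hij, hjk, h1, h2⟩
  rw [mkperm_apply] at h1 h2
  rw [mkperm_apply] at h1 h2
  have wk : ∀ x y : Fin n, x < y → w x ≠ 1 → w y ≠ 1 →
      mkfun w hB x ≤ mkfun w hB y := by
    intro x y hxy hx hy
    rcases fin3_cases (w x) with hx' | hx' | hx' <;>
      rcases fin3_cases (w y) with hy' | hy' | hy'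
    · exact mk_mono_a hB hx' hy' hxy.le
    · exact absurd hy' hy
    · rw [mkfun_f hB hy']
      exact (mk_a_lt_f hv hB hx' hy' hxy).le
    · exact absurd hx' hx
    · exact absurd hx' hx
    · exact absurd hx' hx
    · rw [mkfun_f hB hx']
      exact le_of_lt (lt_trans hxy (lt_mk_a hv hB hy'))
    · exact absurd hy' hy
    · rw [mkfun_f hB hx', mkfun_f hB hy']
      exact hxy.le
  have bk : ∀ x y : Fin n, x < y → w x = 1 → w y = 1 →
      mkfun w hB x ≤ mkfun w hB y := fun x y hxy hx hy => mk_mono_b hB hx hy hxy.le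
  by_cases wj : w j = 1
  · by_cases wi : w i = 1
    · exact absurd (bk i j hij wi wj) (not_le.2 h2)
    · by_cases wk' : w k = 1
      · exact absurd (bk j k hjk wj wk') (not_le.2 h1)
      · exact absurd (wk i k (lt_trans hij hjk) wi wk') (not_le.2 (lt_trans h1 h2))
  · by_cases wi : w i = 1
    · by_cases wk' : w k = 1
      · exact absurd (bk i k (lt_trans hij hjk) wi wk') (not_le.2 (lt_trans h1 h2))
      · exact absurd (wk j k hjk wj wk') (not_le.2 h1)
    · exact absurd (wk i j hij wi wj) (not_le.2 h2)

lemma mk_descent_iff {n : ℕ} {w : Fin n → Fin 3} (hv : Valid w)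
    (hB : (lset w 1).card = (lset w 0).card) {x x' : Fin n} (hx' : x'.val = x.val + 1) :
    (mkfun w hB x' < mkfun w hB x) ↔ (w x = 0 ∧ w x' = 1) := by
  have hxlt : x < x' := by rw [Fin.lt_def]; omega
  rcases fin3_cases (w x) with hx | hx | hx <;> rcases fin3_cases (w x') with hy | hy | hy
  · -- (a, a)
    refine iff_of_false (not_lt.2 (mk_mono_a hB hx hy hxlt.le)) ?_
    rintro ⟨-, h⟩; rw [hy] at h; exact absurd h (by decide)
  · -- (a, b) : descent
    refine iff_of_true ?_ ⟨hx, hy⟩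
    have e1 : cnt w 1 x'.val = cnt w 1 x.val := by
      rw [hx', cnt_succ_self, if_neg (by rw [hx]; decide), add_zero]
    have h2 : cnt w 1 x.val ≤ cnt w 0 x.val := hv.le x.val
    have hle : mkfun w hB x' ≤ x := by
      rw [mkfun_b hB hy]
      calc ((lset w 0).orderEmbOfFin rfl ⟨cnt w 1 x'.val, _⟩ : Fin n)
          ≤ (lset w 0).orderEmbOfFin rfl ⟨cnt w 0 x.val, rank_lt_card hx⟩ :=
            ((lset w 0).orderEmbOfFin rfl).monotone (by rw [Fin.mk_le_mk]; omega)
        _ = x := emb_rank hx rfl _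
    exact lt_of_le_of_lt hle (lt_mk_a hv hB hx)
  · -- (a, f) : impossible
    exfalso
    have e1 : cnt w 0 x'.val = cnt w 0 x.val + 1 := by
      rw [hx', cnt_succ_self, if_pos hx]
    have e2 : cnt w 1 x'.val = cnt w 1 x.val := by
      rw [hx', cnt_succ_self, if_neg (by rw [hx]; decide), add_zero]
    have e3 := hv.2 x' hy
    have e4 := hv.le x.val
    omega
  · -- (b, a)
    refine iff_of_false (not_lt.2 ?_) ?_
    · have e1 : cnt w 0 x'.val = cnt w 0 x.val := by
        rw [hx', cnt_succ_self, if_neg (by rw [hx]; decide), add_zero]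
      have h2 : cnt w 1 x.val ≤ cnt w 0 x.val := hv.le x.val
      have hle : mkfun w hB x ≤ x' := by
        rw [mkfun_b hB hx]
        calc ((lset w 0).orderEmbOfFin rfl ⟨cnt w 1 x.val, _⟩ : Fin n)
            ≤ (lset w 0).orderEmbOfFin rfl ⟨cnt w 0 x'.val, rank_lt_card hy⟩ :=
              ((lset w 0).orderEmbOfFin rfl).monotone (by rw [Fin.mk_le_mk]; omega)
          _ = x' := emb_rank hy rfl _
      exact le_of_lt (lt_of_le_of_lt hle (lt_mk_a hv hB hy))
    · rintro ⟨h, -⟩; rw [hx] at h; exact absurd h (by decide)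
  · -- (b, b)
    refine iff_of_false (not_lt.2 ?_) ?_
    · exact mk_mono_b hB hx hy hxlt.le
    · rintro ⟨h, -⟩; rw [hx] at h; exact absurd h (by decide)
  · -- (b, f)
    refine iff_of_false (not_lt.2 ?_) ?_
    · rw [mkfun_f hB hy, mkfun_b hB hx]
      apply le_of_lt
      rw [Fin.lt_def]
      apply emb_lt_of_cnt_gt w 0 rfl
      have e1 : cnt w 0 x'.val = cnt w 1 x'.val := hv.2 x' hy
      have e2 : cnt w 1 x'.val = cnt w 1 x.val + 1 := by
        rw [hx', cnt_succ_self, if_pos hx]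
      simp only [Fin.val_mk]
      omega
    · rintro ⟨h, -⟩; rw [hx] at h; exact absurd h (by decide)
  · -- (f, a)
    refine iff_of_false (not_lt.2 ?_) ?_
    · rw [mkfun_f hB hx]
      exact le_of_lt (lt_trans hxlt (lt_mk_a hv hB hy))
    · rintro ⟨h, -⟩; rw [hx] at h; exact absurd h (by decide)
  · -- (f, b) : impossible
    exfalso
    have e0 := hv.2 x hx
    have e2 : cnt w 1 x'.val = cnt w 1 x.val := by
      rw [hx', cnt_succ_self, if_neg (by rw [hx]; decide), add_zero]
    set r : Fin (lset w 0).card := ⟨cnt w 1 x'.val, lt_of_lt_of_eq (rank_lt_card hy) hB⟩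
      with hrdef
    have hlt := embA_lt_embB hv hB r
    have hx'eq : (lset w 1).orderEmbOfFin hB r = x' := emb_rank hy hB _
    set a := (lset w 0).orderEmbOfFin rfl r with hadef
    have hwa : w a = 0 := w_emb w 0 rfl r
    have hane : a ≠ x := by
      intro e; rw [e, hx] at hwa; exact absurd hwa (by decide)
    have haval : a.val < x'.val := by rw [← hx'eq]; exact hlt
    have haltx : a.val < x.val := by
      have : a.val ≠ x.val := fun e => hane (Fin.ext e)
      omega
    have hcnta : cnt w 0 a.val = r.val := cnt_emb w 0 rfl r
    have h5 : cnt w 0 (a.val + 1) = cnt w 0 a.val + 1 := by rw [cnt_succ_self, if_pos hwa]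
    have h6 : cnt w 0 (a.val + 1) ≤ cnt w 0 x.val := cnt_mono w 0 (by omega)
    have h7 : r.val = cnt w 1 x'.val := rfl
    omega
  · -- (f, f)
    refine iff_of_false (not_lt.2 ?_) ?_
    · rw [mkfun_f hB hx, mkfun_f hB hy]
      exact hxlt.le
    · rintro ⟨h, -⟩; rw [hx] at h; exact absurd h (by decide)

/-- the word of a permutation: letter records excedance / deficiency / fixed point -/
def wd {n : ℕ} (π : Equiv.Perm (Fin n)) : Fin n → Fin 3 := fun i =>
  if i.val < (π i).val then 0 else if (π i).val < i.val then 1 else 2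

lemma wd_eq_a {n : ℕ} {π : Equiv.Perm (Fin n)} {i : Fin n} (h : i.val < (π i).val) :
    wd π i = 0 := by unfold wd; rw [if_pos h]

lemma wd_eq_b {n : ℕ} {π : Equiv.Perm (Fin n)} {i : Fin n} (h : (π i).val < i.val) :
    wd π i = 1 := by unfold wd; rw [if_neg (by omega), if_pos h]

lemma wd_eq_f {n : ℕ} {π : Equiv.Perm (Fin n)} {i : Fin n} (h : π i = i) :
    wd π i = 2 := by unfold wd; rw [if_neg (by rw [h]; omega), if_neg (by rw [h]; omega)]

lemma wd_a_iff {n : ℕ} {π : Equiv.Perm (Fin n)} {i : Fin n} :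
    wd π i = 0 ↔ i.val < (π i).val := by
  constructor
  · intro h
    unfold wd at h
    split_ifs at h with h1 h2
    · exact h1
    · exact absurd h (by decide)
    · exact absurd h (by decide)
  · exact wd_eq_a

lemma wd_b_iff {n : ℕ} {π : Equiv.Perm (Fin n)} {i : Fin n} :
    wd π i = 1 ↔ (π i).val < i.val := by
  constructor
  · intro h
    unfold wd at h
    split_ifs at h with h1 h2
    · exact absurd h (by decide)
    · exact h2
    · exact absurd h (by decide)
  · exact wd_eq_b

lemma wd_f_iff {n : ℕ} {π : Equiv.Perm (Fin n)} {i : Fin n} :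
    wd π i = 2 ↔ π i = i := by
  constructor
  · intro h
    unfold wd at h
    split_ifs at h with h1 h2
    · exact absurd h (by decide)
    · exact absurd h (by decide)
    · exact Fin.ext (by omega)
  · exact wd_eq_f

/-- from a 321 pattern-free involution: excedances before a fixed point close before it -/
lemma fix321 {n : ℕ} {π : Equiv.Perm (Fin n)} (h321 : avoids321 π) (hinv : isInvolution π)
    {x i : Fin n} (hxi : x < i) (hx : x.val < (π x).val) (hi : π i = i) :
    (π x).val < i.val := by
  by_contra hc
  push_neg at hc
  have hne : π x ≠ i := by
    intro e
    have : π (π x) = π i := by rw [e]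
    rw [hinv, hi] at this
    rw [this] at hxi
    exact lt_irrefl _ hxi
  have hlt : i < π x := by
    rw [Fin.lt_def]
    have : i.val ≠ (π x).val := fun e => hne (Fin.ext e.symm)
    omega
  exact h321 ⟨x, i, π x, hxi, hlt, by rw [hinv, hi, Fin.lt_def]; omega,
    by rw [hi, Fin.lt_def]; omega⟩

/-- excedance values increase -/
lemma exc_mono {n : ℕ} {π : Equiv.Perm (Fin n)} (h321 : avoids321 π) (hinv : isInvolution π)
    {x y : Fin n} (hxy : x < y) (hx : x.val < (π x).val) (hy : y.val < (π y).val) :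
    (π x).val < (π y).val := by
  by_contra hc
  push_neg at hc
  have hne : (π y).val ≠ (π x).val := by
    intro e
    exact absurd (π.injective (Fin.ext e)) (by intro e'; rw [e'] at hxy; exact lt_irrefl _ hxy)
  have h1 : (π y).val < (π x).val := by omega
  have hypx : y < π x := by rw [Fin.lt_def]; omega
  exact h321 ⟨x, y, π x, hxy, hypx, by rw [hinv, Fin.lt_def]; omega, by rw [Fin.lt_def]; omega⟩

lemma wd_cnt_ba {n : ℕ} {π : Equiv.Perm (Fin n)} (hinv : isInvolution π) (j : ℕ) :
    cnt (wd π) 1 j ≤ cnt (wd π) 0 j := by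
  unfold cnt
  apply Finset.card_le_card_of_injOn π
  · intro x hx
    simp only [mem_coe, mem_filter, mem_univ, true_and] at hx ⊢
    obtain ⟨hxj, hxb⟩ := hx
    rw [wd_b_iff] at hxb
    refine ⟨by omega, ?_⟩
    rw [wd_a_iff, hinv]
    exact hxb
  · intro a _ b _ h
    exact π.injective h

lemma wd_cnt_ab_fix {n : ℕ} {π : Equiv.Perm (Fin n)} (h321 : avoids321 π)
    (hinv : isInvolution π) {i : Fin n} (hi : π i = i) :
    cnt (wd π) 0 i.val ≤ cnt (wd π) 1 i.val := by
  unfold cnt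
  apply Finset.card_le_card_of_injOn π
  · intro x hx
    simp only [mem_coe, mem_filter, mem_univ, true_and] at hx ⊢
    obtain ⟨hxj, hxa⟩ := hx
    rw [wd_a_iff] at hxa
    have hxi : x < i := by rw [Fin.lt_def]; omega
    have := fix321 h321 hinv hxi hxa hi
    refine ⟨this, ?_⟩
    rw [wd_b_iff, hinv]
    exact hxa
  · intro a _ b _ h
    exact π.injective h

lemma wd_cnt_ab_all {n : ℕ} {π : Equiv.Perm (Fin n)} (hinv : isInvolution π) :
    cnt (wd π) 0 n ≤ cnt (wd π) 1 n := by
  unfold cnt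
  apply Finset.card_le_card_of_injOn π
  · intro x hx
    simp only [mem_coe, mem_filter, mem_univ, true_and] at hx ⊢
    obtain ⟨hxj, hxa⟩ := hx
    rw [wd_a_iff] at hxa
    refine ⟨(π x).isLt, ?_⟩
    rw [wd_b_iff, hinv]
    exact hxa
  · intro a _ b _ h
    exact π.injective h

lemma wd_valid {n : ℕ} {π : Equiv.Perm (Fin n)} (h321 : avoids321 π)
    (hinv : isInvolution π) : Valid (wd π) := by
  constructor
  · intro j _
    exact wd_cnt_ba hinv j
  · intro i hi
    rw [wd_f_iff] at hi
    exact le_antisymm (wd_cnt_ab_fix h321 hinv hi) (wd_cnt_ba hinv i.val)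

lemma wd_bal {n : ℕ} {π : Equiv.Perm (Fin n)} (hinv : isInvolution π) : Bal (wd π) :=
  le_antisymm (wd_cnt_ab_all hinv) (wd_cnt_ba hinv n)

lemma mkperm_wd {n : ℕ} {π : Equiv.Perm (Fin n)} (h321 : avoids321 π)
    (hinv : isInvolution π) :
    mkperm (wd π) (wd_bal hinv).card_eq = π := by
  have funeq : (fun r => π ((lset (wd π) 0).orderEmbOfFin rfl r)) =
      ⇑((lset (wd π) 1).orderEmbOfFin (wd_bal hinv).card_eq) := by
    apply Finset.orderEmbOfFin_unique
    · intro r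
      have ha : (((lset (wd π) 0).orderEmbOfFin rfl r) : Fin n).val
          < (π ((lset (wd π) 0).orderEmbOfFin rfl r)).val :=
        wd_a_iff.mp (w_emb (wd π) 0 rfl r)
      simp only [lset, mem_filter, mem_univ, true_and]
      apply wd_eq_b
      rw [hinv]
      exact ha
    · intro r r' hrr'
      have hm := ((lset (wd π) 0).orderEmbOfFin rfl).strictMono hrr'
      have h1 := wd_a_iff.mp (w_emb (wd π) 0 rfl r)
      have h2 := wd_a_iff.mp (w_emb (wd π) 0 rfl r')
      have : (π ((lset (wd π) 0).orderEmbOfFin rfl r)).val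
          < (π ((lset (wd π) 0).orderEmbOfFin rfl r')).val := exc_mono h321 hinv hm h1 h2
      exact this
  have mk_a_eq : ∀ y : Fin n, wd π y = 0 →
      mkfun (wd π) (wd_bal hinv).card_eq y = π y := by
    intro y hy
    rw [mkfun_a _ hy]
    have := congr_fun funeq ⟨cnt (wd π) 0 y.val, rank_lt_card hy⟩
    rw [emb_rank hy rfl] at this
    exact this.symm
  apply Equiv.ext
  intro x
  rw [mkperm_apply]
  rcases fin3_cases (wd π x) with hx | hx | hx
  · exact mk_a_eq x hx
  · have hpx : wd π (π x) = 0 := by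
      apply wd_eq_a
      rw [hinv]
      exact wd_b_iff.mp hx
    have h1 : mkfun (wd π) (wd_bal hinv).card_eq (π x) = π (π x) := mk_a_eq (π x) hpx
    rw [hinv] at h1
    have h2 := congr_arg (mkfun (wd π) (wd_bal hinv).card_eq) h1
    rw [mkfun_invol (wd π) (wd_bal hinv).card_eq (π x)] at h2
    exact h2.symm
  · rw [mkfun_f _ hx]
    exact (wd_f_iff.mp hx).symm

/-- descent set of a word (mirrors `desSet`) -/
def dSet {n : ℕ} (w : Fin n → Fin 3) : Finset ℕ :=
  (Finset.Ico 1 n).filter (fun i =>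
    ∃ h : i < n, w ⟨i, h⟩ = 1 ∧ w ⟨i - 1, Nat.lt_of_le_of_lt (Nat.sub_le i 1) h⟩ = 0)

lemma desSet_mkperm {n : ℕ} {w : Fin n → Fin 3} (hv : Valid w)
    (hB : (lset w 1).card = (lset w 0).card) :
    desSet (mkperm w hB) = dSet w := by
  unfold desSet dSet
  apply Finset.filter_congr
  intro i hi
  rw [Finset.mem_Ico] at hi
  obtain ⟨hi1, hi2⟩ := hi
  constructor
  · rintro ⟨h, hlt⟩
    refine ⟨h, ?_⟩
    rw [mkperm_apply, mkperm_apply] at hlt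
    have := (mk_descent_iff hv hB (x := ⟨i - 1, by omega⟩) (x' := ⟨i, h⟩)
      (by simp; omega)).mp hlt
    exact ⟨this.2, this.1⟩
  · rintro ⟨h, h1, h0⟩
    refine ⟨h, ?_⟩
    rw [mkperm_apply, mkperm_apply]
    exact (mk_descent_iff hv hB (x := ⟨i - 1, by omega⟩) (x' := ⟨i, h⟩)
      (by simp; omega)).mpr ⟨h0, h1⟩

lemma wd_mkperm {n : ℕ} {w : Fin n → Fin 3} (hv : Valid w)
    (hB : (lset w 1).card = (lset w 0).card) :
    wd (mkperm w hB) = w := by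
  funext x
  rcases fin3_cases (w x) with hx | hx | hx
  · rw [hx]
    apply wd_eq_a
    rw [mkperm_apply]
    exact lt_mk_a hv hB hx
  · rw [hx]
    apply wd_eq_b
    rw [mkperm_apply]
    exact mk_b_lt hv hB hx
  · rw [hx]
    apply wd_eq_f
    rw [mkperm_apply]
    exact mkfun_f hB hx

/-- Part A: the permutation count equals the word count. -/
theorem cardA (n k : ℕ) :
    ((Finset.univ : Finset (Equiv.Perm (Fin n))).filter
      (fun π => isInvolution π ∧ avoids321 π ∧ (desSet π).card = k)).card =
    ((Finset.univ : Finset (Fin n → Fin 3)).filter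
      (fun w => Valid w ∧ Bal w ∧ (dSet w).card = k)).card := by
  refine Finset.card_bij' (fun π _ => wd π)
    (fun w hw => mkperm w (Bal.card_eq (Finset.mem_filter.mp hw).2.2.1)) ?_ ?_ ?_ ?_
  · intro π hπ
    simp only [mem_filter, mem_univ, true_and] at hπ ⊢
    obtain ⟨hinv, h321, hdes⟩ := hπ
    refine ⟨wd_valid h321 hinv, wd_bal hinv, ?_⟩
    rw [← desSet_mkperm (wd_valid h321 hinv) (wd_bal hinv).card_eq, mkperm_wd h321 hinv]
    exact hdes
  · intro w hw
    have hw' := (Finset.mem_filter.mp hw).2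
    obtain ⟨hv, hb, hdes⟩ := hw'
    simp only [mem_filter, mem_univ, true_and]
    refine ⟨mkperm_isInvolution _ _, mkperm_avoids hv _, ?_⟩
    rw [desSet_mkperm hv]
    exact hdes
  · intro π hπ
    simp only [mem_filter, mem_univ, true_and] at hπ
    exact mkperm_wd hπ.2.1 hπ.1
  · intro w hw
    have hw' := (Finset.mem_filter.mp hw).2
    exact wd_mkperm hw'.1 _

/-- the word ends with letter `a` -/
def lastA {n : ℕ} (w : Fin n → Fin 3) : Prop :=
  ∃ hn : 0 < n, w ⟨n - 1, Nat.sub_lt hn one_pos⟩ = 0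

instance {n : ℕ} (w : Fin n → Fin 3) : Decidable (lastA w) := by
  unfold lastA; infer_instance

lemma lastA_succ {n : ℕ} (w : Fin (n+1) → Fin 3) :
    lastA w ↔ w (Fin.last n) = 0 := by
  constructor
  · rintro ⟨hn, h⟩
    exact h
  · intro h
    exact ⟨Nat.succ_pos n, h⟩

lemma cnt_snoc_all {n : ℕ} (w : Fin (n+1) → Fin 3) (c : Fin 3) (j : ℕ) :
    cnt w c j = cnt (Fin.init w) c j + if n < j ∧ w (Fin.last n) = c then 1 else 0 := by
  unfold cnt
  rw [Finset.card_filter, Finset.card_filter, Fin.sum_univ_castSucc]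
  rfl

lemma cnt_init {n : ℕ} (w : Fin (n+1) → Fin 3) (c : Fin 3) {j : ℕ} (hj : j ≤ n) :
    cnt (Fin.init w) c j = cnt w c j := by
  rw [cnt_snoc_all w c j, if_neg (by omega), add_zero]

lemma w_mk_eq {n : ℕ} (w : Fin n → Fin 3) {a b : ℕ} (ha : a < n) (hb : b < n) (e : a = b) :
    w ⟨a, ha⟩ = w ⟨b, hb⟩ := by
  congr 1
  exact Fin.ext e

lemma dSet_card_snoc {n : ℕ} (w : Fin (n+1) → Fin 3) :
    (dSet w).card = (dSet (Fin.init w)).card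
      + if w (Fin.last n) = 1 ∧ lastA (Fin.init w) then 1 else 0 := by
  classical
  have hn_mem : (n : ℕ) ∉ dSet (Fin.init w) := by
    intro h
    have := Finset.mem_of_mem_filter _ h
    rw [Finset.mem_Ico] at this
    omega
  have key : dSet w = dSet (Fin.init w)
      ∪ (if w (Fin.last n) = 1 ∧ lastA (Fin.init w) then {n} else ∅) := by
    ext i
    unfold dSet
    simp only [Finset.mem_union, Finset.mem_filter, Finset.mem_Ico]
    constructor
    · rintro ⟨⟨hi1, hi2⟩, h, h1, h0⟩
      by_cases hin : i < n
      · left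
        exact ⟨⟨hi1, hin⟩, hin, h1, h0⟩
      · have hieq : i = n := by omega
        right
        have hw1 : w (Fin.last n) = 1 := by
          rw [w_mk_eq w h (show n < n + 1 by omega) hieq] at h1
          exact h1
        have hla : lastA (Fin.init w) := by
          refine ⟨by omega, ?_⟩
          show w ⟨n - 1, by omega⟩ = 0
          rw [w_mk_eq w (by omega) (Nat.lt_of_le_of_lt (Nat.sub_le i 1) h) (by omega)]
          exact h0
        rw [if_pos ⟨hw1, hla⟩, Finset.mem_singleton]
        exact hieq

    · rintro (⟨⟨hi1, hi2⟩, h, h1, h0⟩ | hmem)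
      · exact ⟨⟨hi1, by omega⟩, by omega, h1, h0⟩
      · split_ifs at hmem with hc
        · rw [Finset.mem_singleton] at hmem
          obtain ⟨hw1, hla⟩ := hc
          obtain ⟨hn0, h0⟩ := hla
          refine ⟨⟨by omega, by omega⟩, by omega, ?_, ?_⟩
          · rw [w_mk_eq w (by omega) (show n < n + 1 by omega) hmem]
            exact hw1
          · rw [w_mk_eq w (by omega) (show n - 1 < n + 1 by omega) (by omega)]
            exact h0
        · exact absurd hmem (Finset.notMem_empty i)
  rw [key, Finset.card_union_of_disjoint]
  · congr 1
    split_ifs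
    · exact Finset.card_singleton n
    · exact Finset.card_empty
  · split_ifs
    · rw [Finset.disjoint_singleton_right]
      exact hn_mem
    · exact Finset.disjoint_empty_right _

lemma valid_snoc {n : ℕ} (w : Fin (n+1) → Fin 3) :
    Valid w ↔ Valid (Fin.init w)
      ∧ (cnt (Fin.init w) 1 n + (if w (Fin.last n) = 1 then 1 else 0)
          ≤ cnt (Fin.init w) 0 n + (if w (Fin.last n) = 0 then 1 else 0))
      ∧ (w (Fin.last n) = 2 → cnt (Fin.init w) 0 n = cnt (Fin.init w) 1 n) := by
  constructor
  · intro hv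
    refine ⟨⟨?_, ?_⟩, ?_, ?_⟩
    · intro j hj
      rw [cnt_init w 1 hj, cnt_init w 0 hj]
      exact hv.1 j (by omega)
    · intro i hi
      have hiv : Fin.init w i = w i.castSucc := rfl
      rw [hiv] at hi
      have := hv.2 i.castSucc hi
      have hc : (i.castSucc).val = i.val := rfl
      rw [hc] at this
      rw [cnt_init w 0 (by omega), cnt_init w 1 (by omega)]
      exact this
    · have := hv.1 (n+1) le_rfl
      rw [cnt_snoc_all w 1 (n+1), cnt_snoc_all w 0 (n+1),
        cnt_stable (Fin.init w) 1 (show n ≤ n + 1 from Nat.le_succ n), cnt_stable (Fin.init w) 0 (show n ≤ n + 1 from Nat.le_succ n)]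
        at this
      simp only [Nat.lt_succ_self, true_and] at this
      exact this
    · intro h2
      have := hv.2 (Fin.last n) h2
      have hc : (Fin.last n).val = n := rfl
      rw [hc] at this
      rw [cnt_init w 0 le_rfl, cnt_init w 1 le_rfl]
      exact this
  · rintro ⟨hv', hineq, hf⟩
    constructor
    · intro j hj
      rcases Nat.lt_or_ge j (n+1) with h | h
      · have hjn : j ≤ n := by omega
        rw [cnt_snoc_all w 1 j, cnt_snoc_all w 0 j, if_neg (by omega), if_neg (by omega)]
        simpa using hv'.1 j hjn
      · have hjeq : j = n + 1 := by omega
        subst hjeq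
        rw [cnt_snoc_all w 1 (n+1), cnt_snoc_all w 0 (n+1),
          cnt_stable (Fin.init w) 1 (show n ≤ n + 1 from Nat.le_succ n), cnt_stable (Fin.init w) 0 (show n ≤ n + 1 from Nat.le_succ n)]
        simp only [Nat.lt_succ_self, true_and]
        exact hineq
    · intro i hi
      by_cases hin : i.val < n
      · have hiv : w i = Fin.init w ⟨i.val, hin⟩ := rfl
        rw [hiv] at hi
        have := hv'.2 ⟨i.val, hin⟩ hi
        have hc : ((⟨i.val, hin⟩ : Fin n)).val = i.val := rfl
        rw [hc] at this
        rw [← cnt_init w 0 (show i.val ≤ n by omega), ← cnt_init w 1 (show i.val ≤ n by omega)]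
        exact this
      · have hieq : i = Fin.last n := Fin.ext (by have := i.isLt; simp; omega)
        subst hieq
        have := hf hi
        have hc : (Fin.last n).val = n := rfl
        rw [hc, ← cnt_init w 0 le_rfl, ← cnt_init w 1 le_rfl]
        exact this

/-- the snoc bijection -/
lemma card_filter_snoc {n : ℕ} (c : Fin 3) (p : (Fin n → Fin 3) → Prop) [DecidablePred p] :
    ((univ : Finset (Fin (n+1) → Fin 3)).filter
      (fun w => w (Fin.last n) = c ∧ p (Fin.init w))).card
    = ((univ : Finset (Fin n → Fin 3)).filter p).card := by
  classical
  refine Finset.card_bij' (fun w _ => Fin.init w) (fun w' _ => Fin.snoc w' c) ?_ ?_ ?_ ?_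
  · intro w hw
    simp only [mem_filter, mem_univ, true_and] at hw ⊢
    exact hw.2
  · intro w' hw'
    simp only [mem_filter, mem_univ, true_and] at hw' ⊢
    constructor
    · rw [Fin.snoc_last]
    · rw [Fin.init_snoc]
      exact hw'
  · intro w hw
    simp only [mem_filter, mem_univ, true_and] at hw
    obtain ⟨h1, h2⟩ := hw
    subst h1
    exact Fin.snoc_init_self w
  · intro w' _
    simp

/-- words counted with height `h` and `k` descents -/
def baseW (n h k : ℕ) (w : Fin n → Fin 3) : Prop :=
  Valid w ∧ cnt w 0 n = cnt w 1 n + h ∧ (dSet w).card = k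

instance {n h k : ℕ} (w : Fin n → Fin 3) : Decidable (baseW n h k w) := by
  unfold baseW; infer_instance

def PC (n h k : ℕ) : ℕ :=
  ((univ : Finset (Fin n → Fin 3)).filter fun w => baseW n h k w ∧ lastA w).card

def QC (n h k : ℕ) : ℕ :=
  ((univ : Finset (Fin n → Fin 3)).filter fun w => baseW n h k w ∧ ¬ lastA w).card

lemma PC_add_QC (n h k : ℕ) :
    PC n h k + QC n h k = ((univ : Finset (Fin n → Fin 3)).filter (baseW n h k)).card := by
  unfold PC QC
  rw [← Finset.filter_filter, ← Finset.filter_filter]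
  exact Finset.card_filter_add_card_filter_not _

lemma card_split {α : Type*} [Fintype α] (p q : α → Prop)
    [DecidablePred p] [DecidablePred q] :
    ((univ : Finset α).filter p).card
      = ((univ : Finset α).filter fun a => p a ∧ q a).card
        + ((univ : Finset α).filter fun a => p a ∧ ¬ q a).card := by
  rw [← Finset.filter_filter, ← Finset.filter_filter]
  exact (Finset.card_filter_add_card_filter_not _).symm

lemma filter_iff_card {α : Type*} [Fintype α] (p q : α → Prop)
    [DecidablePred p] [DecidablePred q] (h : ∀ a, p a ↔ q a) :
    ((univ : Finset α).filter p).card = ((univ : Finset α).filter q).card := by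
  congr 1
  apply Finset.filter_congr
  intro a _
  exact h a

section transport

variable {n h k : ℕ} {w : Fin (n+1) → Fin 3}

lemma base_a (hc : w (Fin.last n) = 0) :
    baseW (n+1) (h+1) k w ↔ baseW n h k (Fin.init w) := by
  have e0 := cnt_snoc_all w 0 (n+1)
  have e1 := cnt_snoc_all w 1 (n+1)
  rw [if_pos ⟨n.lt_succ_self, hc⟩] at e0
  rw [if_neg (by rintro ⟨-, hx⟩; rw [hc] at hx; exact absurd hx (by decide))] at e1
  have s0 := cnt_stable (Fin.init w) 0 (show n ≤ n + 1 from Nat.le_succ n)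
  have s1 := cnt_stable (Fin.init w) 1 (show n ≤ n + 1 from Nat.le_succ n)
  have ed := dSet_card_snoc w
  rw [if_neg (by rintro ⟨hx, -⟩; rw [hc] at hx; exact absurd hx (by decide)), add_zero] at ed
  constructor
  · rintro ⟨hv, hh, hd⟩
    refine ⟨((valid_snoc w).mp hv).1, by omega, by omega⟩
  · rintro ⟨hv', hh', hd'⟩
    refine ⟨(valid_snoc w).mpr ⟨hv', ?_, ?_⟩, by omega, by omega⟩
    · rw [if_neg (by rw [hc]; decide), if_pos hc]
      have := hv'.1 n le_rfl
      omega
    · intro h2; rw [hc] at h2; exact absurd h2 (by decide)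

lemma base_a_zero (hc : w (Fin.last n) = 0) (hb : baseW (n+1) 0 k w) : False := by
  have e0 := cnt_snoc_all w 0 (n+1)
  have e1 := cnt_snoc_all w 1 (n+1)
  rw [if_pos ⟨n.lt_succ_self, hc⟩] at e0
  rw [if_neg (by rintro ⟨-, hx⟩; rw [hc] at hx; exact absurd hx (by decide))] at e1
  have s0 := cnt_stable (Fin.init w) 0 (show n ≤ n + 1 from Nat.le_succ n)
  have s1 := cnt_stable (Fin.init w) 1 (show n ≤ n + 1 from Nat.le_succ n)
  have hv' := ((valid_snoc w).mp hb.1).1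
  have := hv'.1 n le_rfl
  have hh := hb.2.1
  omega

lemma base_b_T (hc : w (Fin.last n) = 1) (hT : lastA (Fin.init w)) :
    baseW (n+1) h k w ↔ (1 ≤ k ∧ baseW n (h+1) (k-1) (Fin.init w)) := by
  have e0 := cnt_snoc_all w 0 (n+1)
  have e1 := cnt_snoc_all w 1 (n+1)
  rw [if_pos ⟨n.lt_succ_self, hc⟩] at e1
  rw [if_neg (by rintro ⟨-, hx⟩; rw [hc] at hx; exact absurd hx (by decide))] at e0
  have s0 := cnt_stable (Fin.init w) 0 (show n ≤ n + 1 from Nat.le_succ n)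
  have s1 := cnt_stable (Fin.init w) 1 (show n ≤ n + 1 from Nat.le_succ n)
  have ed := dSet_card_snoc w
  rw [if_pos ⟨hc, hT⟩] at ed
  constructor
  · rintro ⟨hv, hh, hd⟩
    refine ⟨by omega, ((valid_snoc w).mp hv).1, by omega, by omega⟩
  · rintro ⟨hk, hv', hh', hd'⟩
    refine ⟨(valid_snoc w).mpr ⟨hv', ?_, ?_⟩, by omega, by omega⟩
    · rw [if_pos hc, if_neg (by rw [hc]; decide)]
      omega
    · intro h2; rw [hc] at h2; exact absurd h2 (by decide)

lemma base_b_NT (hc : w (Fin.last n) = 1) (hT : ¬ lastA (Fin.init w)) :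
    baseW (n+1) h k w ↔ baseW n (h+1) k (Fin.init w) := by
  have e0 := cnt_snoc_all w 0 (n+1)
  have e1 := cnt_snoc_all w 1 (n+1)
  rw [if_pos ⟨n.lt_succ_self, hc⟩] at e1
  rw [if_neg (by rintro ⟨-, hx⟩; rw [hc] at hx; exact absurd hx (by decide))] at e0
  have s0 := cnt_stable (Fin.init w) 0 (show n ≤ n + 1 from Nat.le_succ n)
  have s1 := cnt_stable (Fin.init w) 1 (show n ≤ n + 1 from Nat.le_succ n)
  have ed := dSet_card_snoc w
  rw [if_neg (by rintro ⟨-, hx⟩; exact hT hx), add_zero] at ed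
  constructor
  · rintro ⟨hv, hh, hd⟩
    refine ⟨((valid_snoc w).mp hv).1, by omega, by omega⟩
  · rintro ⟨hv', hh', hd'⟩
    refine ⟨(valid_snoc w).mpr ⟨hv', ?_, ?_⟩, by omega, by omega⟩
    · rw [if_pos hc, if_neg (by rw [hc]; decide)]
      omega
    · intro h2; rw [hc] at h2; exact absurd h2 (by decide)

lemma base_f (hc : w (Fin.last n) = 2) :
    baseW (n+1) h k w ↔ (h = 0 ∧ baseW n 0 k (Fin.init w)) := by
  have e0 := cnt_snoc_all w 0 (n+1)
  have e1 := cnt_snoc_all w 1 (n+1)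
  rw [if_neg (by rintro ⟨-, hx⟩; rw [hc] at hx; exact absurd hx (by decide)), add_zero] at e1
  rw [if_neg (by rintro ⟨-, hx⟩; rw [hc] at hx; exact absurd hx (by decide)), add_zero] at e0
  have s0 := cnt_stable (Fin.init w) 0 (show n ≤ n + 1 from Nat.le_succ n)
  have s1 := cnt_stable (Fin.init w) 1 (show n ≤ n + 1 from Nat.le_succ n)
  have ed := dSet_card_snoc w
  rw [if_neg (by rintro ⟨hx, -⟩; rw [hc] at hx; exact absurd hx (by decide)), add_zero] at ed
  constructor
  · rintro ⟨hv, hh, hd⟩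
    have hff := ((valid_snoc w).mp hv).2.2 hc
    refine ⟨by omega, ((valid_snoc w).mp hv).1, by omega, by omega⟩
  · rintro ⟨hh0, hv', hh', hd'⟩
    refine ⟨(valid_snoc w).mpr ⟨hv', ?_, fun _ => by omega⟩, by omega, by omega⟩
    rw [if_neg (by rw [hc]; decide), if_neg (by rw [hc]; decide)]
    omega

end transport

lemma recP {n h k : ℕ} : PC (n+1) (h+1) k = PC n h k + QC n h k := by
  unfold PC
  rw [filter_iff_card _ (fun w => w (Fin.last n) = 0 ∧ baseW n h k (Fin.init w))
    (fun w => by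
      constructor
      · rintro ⟨hb, hla⟩
        have hc := (lastA_succ w).mp hla
        exact ⟨hc, (base_a hc).mp hb⟩
      · rintro ⟨hc, hb'⟩
        exact ⟨(base_a hc).mpr hb', (lastA_succ w).mpr hc⟩)]
  rw [card_filter_snoc 0 (baseW n h k), ← PC_add_QC]
  rfl

lemma recP0 {n k : ℕ} : PC (n+1) 0 k = 0 := by
  unfold PC
  rw [Finset.card_eq_zero, Finset.filter_eq_empty_iff]
  rintro w - ⟨hb, hla⟩
  exact base_a_zero ((lastA_succ w).mp hla) hb

lemma not_lastA_of_b {n : ℕ} {w : Fin (n+1) → Fin 3} (hc : w (Fin.last n) = 1) :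
    ¬ lastA w := by
  intro hla
  have := (lastA_succ w).mp hla
  rw [hc] at this
  exact absurd this (by decide)

lemma not_lastA_of_f {n : ℕ} {w : Fin (n+1) → Fin 3} (hc : w (Fin.last n) = 2) :
    ¬ lastA w := by
  intro hla
  have := (lastA_succ w).mp hla
  rw [hc] at this
  exact absurd this (by decide)

lemma recQpos {n h k : ℕ} :
    QC (n+1) (h+1) k = (if k = 0 then 0 else PC n (h+2) (k-1)) + QC n (h+2) k := by
  unfold QC
  rw [card_split (fun w : Fin (n+1) → Fin 3 => baseW (n+1) (h+1) k w ∧ ¬ lastA w)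
    (fun w => lastA (Fin.init w))]
  congr 1
  · -- ending b after an a
    rcases Nat.eq_zero_or_pos k with hk | hk
    · subst hk
      rw [if_pos rfl, Finset.card_eq_zero, Finset.filter_eq_empty_iff]
      rintro w - ⟨⟨hb, hnla⟩, hT⟩
      rcases fin3_cases (w (Fin.last n)) with hc | hc | hc
      · exact hnla ((lastA_succ w).mpr hc)
      · have := ((base_b_T hc hT).mp hb).1
        omega
      · have := ((base_f hc).mp hb).1
        omega
    · rw [if_neg (by omega)]
      rw [filter_iff_card _
        (fun w => w (Fin.last n) = 1 ∧ (baseW n (h+2) (k-1) (Fin.init w) ∧ lastA (Fin.init w)))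
        (fun w => by
          constructor
          · rintro ⟨⟨hb, hnla⟩, hT⟩
            rcases fin3_cases (w (Fin.last n)) with hc | hc | hc
            · exact absurd ((lastA_succ w).mpr hc) hnla
            · exact ⟨hc, ((base_b_T hc hT).mp hb).2, hT⟩
            · have := ((base_f hc).mp hb).1
              omega
          · rintro ⟨hc, hb', hT⟩
            exact ⟨⟨(base_b_T hc hT).mpr ⟨hk, hb'⟩, not_lastA_of_b hc⟩, hT⟩)]
      rw [card_filter_snoc 1 (fun w' => baseW n (h+2) (k-1) w' ∧ lastA w')]
      rfl
  · -- ending b after b or f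
    rw [filter_iff_card _
      (fun w => w (Fin.last n) = 1 ∧ (baseW n (h+2) k (Fin.init w) ∧ ¬ lastA (Fin.init w)))
      (fun w => by
        constructor
        · rintro ⟨⟨hb, hnla⟩, hT⟩
          rcases fin3_cases (w (Fin.last n)) with hc | hc | hc
          · exact absurd ((lastA_succ w).mpr hc) hnla
          · exact ⟨hc, ((base_b_NT hc hT).mp hb), hT⟩
          · have := ((base_f hc).mp hb).1
            omega
        · rintro ⟨hc, hb', hT⟩
          exact ⟨⟨(base_b_NT hc hT).mpr hb', not_lastA_of_b hc⟩, hT⟩)]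
    rw [card_filter_snoc 1 (fun w' => baseW n (h+2) k w' ∧ ¬ lastA w')]

lemma recQ0 {n k : ℕ} :
    QC (n+1) 0 k = (PC n 0 k + QC n 0 k)
      + ((if k = 0 then 0 else PC n 1 (k-1)) + QC n 1 k) := by
  unfold QC
  rw [card_split (fun w : Fin (n+1) → Fin 3 => baseW (n+1) 0 k w ∧ ¬ lastA w)
    (fun w => w (Fin.last n) = 2)]
  congr 1
  · -- ending f
    rw [filter_iff_card _
      (fun w => w (Fin.last n) = 2 ∧ baseW n 0 k (Fin.init w))
      (fun w => by
        constructor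
        · rintro ⟨⟨hb, -⟩, hc⟩
          exact ⟨hc, ((base_f hc).mp hb).2⟩
        · rintro ⟨hc, hb'⟩
          exact ⟨⟨(base_f hc).mpr ⟨rfl, hb'⟩, not_lastA_of_f hc⟩, hc⟩)]
    rw [card_filter_snoc 2 (baseW n 0 k), ← PC_add_QC]
    rfl
  · -- ending b
    rw [card_split (fun w : Fin (n+1) → Fin 3 => (baseW (n+1) 0 k w ∧ ¬ lastA w)
        ∧ ¬ w (Fin.last n) = 2)
      (fun w => lastA (Fin.init w))]
    congr 1
    · rcases Nat.eq_zero_or_pos k with hk | hk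
      · subst hk
        rw [if_pos rfl, Finset.card_eq_zero, Finset.filter_eq_empty_iff]
        rintro w - ⟨⟨⟨hb, hnla⟩, hc2⟩, hT⟩
        rcases fin3_cases (w (Fin.last n)) with hc | hc | hc
        · exact hnla ((lastA_succ w).mpr hc)
        · have := ((base_b_T hc hT).mp hb).1
          omega
        · exact hc2 hc
      · rw [if_neg (by omega)]
        rw [filter_iff_card _
          (fun w => w (Fin.last n) = 1 ∧ (baseW n 1 (k-1) (Fin.init w) ∧ lastA (Fin.init w)))
          (fun w => by
            constructor
            · rintro ⟨⟨⟨hb, hnla⟩, hc2⟩, hT⟩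
              rcases fin3_cases (w (Fin.last n)) with hc | hc | hc
              · exact absurd ((lastA_succ w).mpr hc) hnla
              · exact ⟨hc, ((base_b_T hc hT).mp hb).2, hT⟩
              · exact absurd hc hc2
            · rintro ⟨hc, hb', hT⟩
              exact ⟨⟨⟨(base_b_T hc hT).mpr ⟨hk, hb'⟩, not_lastA_of_b hc⟩,
                by rw [hc]; decide⟩, hT⟩)]
        rw [card_filter_snoc 1 (fun w' => baseW n 1 (k-1) w' ∧ lastA w')]
        rfl
    · rw [filter_iff_card _
        (fun w => w (Fin.last n) = 1 ∧ (baseW n 1 k (Fin.init w) ∧ ¬ lastA (Fin.init w)))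
        (fun w => by
          constructor
          · rintro ⟨⟨⟨hb, hnla⟩, hc2⟩, hT⟩
            rcases fin3_cases (w (Fin.last n)) with hc | hc | hc
            · exact absurd ((lastA_succ w).mpr hc) hnla
            · exact ⟨hc, ((base_b_NT hc hT).mp hb), hT⟩
            · exact absurd hc hc2
          · rintro ⟨hc, hb', hT⟩
            exact ⟨⟨⟨(base_b_NT hc hT).mpr hb', not_lastA_of_b hc⟩,
              by rw [hc]; decide⟩, hT⟩)]
      rw [card_filter_snoc 1 (fun w' => baseW n 1 k w' ∧ ¬ lastA w')]

/-- closed form for words ending in `a` -/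
def tP (n h k : ℕ) : ℕ :=
  if 1 ≤ h ∧ h ≤ n then (n - 1 - (n-h)/2).choose k * ((n-h)/2).choose k else 0

/-- closed form for words ending in `b` or `f` (or empty) -/
def tQ (n h k : ℕ) : ℕ :=
  if h = 0 then ((n+1)/2).choose k * (n/2).choose k
  else if h ≤ n ∧ 1 ≤ k then ((n-h)/2).choose k * (n - 1 - (n-h)/2).choose (k-1) else 0

lemma cnt_le_len {n : ℕ} (w : Fin n → Fin 3) (c : Fin 3) (j : ℕ) : cnt w c j ≤ n := by
  unfold cnt
  calc ((univ : Finset (Fin n)).filter _).card ≤ (univ : Finset (Fin n)).card :=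
        Finset.card_filter_le _ _
    _ = n := by rw [Finset.card_univ, Fintype.card_fin]

lemma PC_high {n h k : ℕ} (hh : n < h) : PC n h k = 0 := by
  unfold PC
  rw [Finset.card_eq_zero, Finset.filter_eq_empty_iff]
  rintro w - ⟨⟨-, hht, -⟩, -⟩
  have := cnt_le_len w 0 n
  omega

lemma QC_high {n h k : ℕ} (hh : n < h) : QC n h k = 0 := by
  unfold QC
  rw [Finset.card_eq_zero, Finset.filter_eq_empty_iff]
  rintro w - ⟨⟨-, hht, -⟩, -⟩
  have := cnt_le_len w 0 n
  omega

lemma cnt_nil (w : Fin 0 → Fin 3) (c : Fin 3) (j : ℕ) : cnt w c j = 0 := by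
  unfold cnt
  simp

lemma dSet_nil (w : Fin 0 → Fin 3) : dSet w = ∅ := by
  unfold dSet
  rw [show Finset.Ico 1 0 = ∅ from Finset.Ico_eq_empty (by omega), Finset.filter_empty]

lemma PC_zero (h k : ℕ) : PC 0 h k = 0 := by
  unfold PC
  rw [Finset.card_eq_zero, Finset.filter_eq_empty_iff]
  rintro w - ⟨-, hn, -⟩
  omega

lemma QC_zero (h k : ℕ) : QC 0 h k = if h = 0 ∧ k = 0 then 1 else 0 := by
  unfold QC
  split_ifs with hcond
  · obtain ⟨rfl, rfl⟩ := hcond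
    have htrue : ∀ w : Fin 0 → Fin 3, w ∈ (univ : Finset (Fin 0 → Fin 3)) →
        (baseW 0 0 0 w ∧ ¬ lastA w) := by
      intro w _
      refine ⟨⟨⟨fun j _ => by rw [cnt_nil, cnt_nil], fun i => i.elim0⟩,
        by rw [cnt_nil, cnt_nil], by rw [dSet_nil]; rfl⟩, ?_⟩
      rintro ⟨hn, -⟩
      omega
    rw [Finset.filter_true_of_mem htrue, Finset.card_univ]
    simp
  · rw [Finset.card_eq_zero, Finset.filter_eq_empty_iff]
    rintro w - ⟨⟨-, hht, hd⟩, -⟩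
    rw [cnt_nil, cnt_nil] at hht
    rw [dSet_nil] at hd
    simp at hd
    omega

lemma tP_zero (h k : ℕ) : tP 0 h k = 0 := by
  unfold tP
  rw [if_neg (by omega)]

lemma tQ_zero (h k : ℕ) : tQ 0 h k = if h = 0 ∧ k = 0 then 1 else 0 := by
  unfold tQ
  rcases Nat.eq_zero_or_pos h with rfl | hh
  · rcases Nat.eq_zero_or_pos k with rfl | hk
    · norm_num
    · rw [if_pos rfl, if_neg (by omega)]
      simp [Nat.choose_eq_zero_of_lt hk]
  · rw [if_neg (by omega), if_neg (by omega), if_neg (by omega)]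

lemma step_tP (n g k : ℕ) : tP (n+1) (g+1) k = tP n g k + tQ n g k := by
  unfold tP tQ
  rcases Nat.lt_or_ge n g with hgn | hgn
  · -- g > n : everything vanishes
    rw [if_neg (show ¬(1 ≤ g+1 ∧ g+1 ≤ n+1) by omega),
      if_neg (show ¬(1 ≤ g ∧ g ≤ n) by omega),
      if_neg (show ¬(g = 0) by omega), if_neg (show ¬(g ≤ n ∧ 1 ≤ k) by omega)]
  rcases Nat.eq_zero_or_pos g with rfl | hg
  · -- g = 0
    rw [if_pos (show 1 ≤ 0+1 ∧ 0+1 ≤ n+1 by omega),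
      if_neg (show ¬(1 ≤ 0 ∧ 0 ≤ n) by omega),
      if_pos (show (0:ℕ) = 0 from rfl),
      show (n + 1 - (0+1))/2 = n/2 by omega,
      show n + 1 - 1 - n/2 = (n+1)/2 by omega]
    exact (zero_add _).symm
  · -- 1 ≤ g ≤ n, so n ≥ 1
    have hn1 : 1 ≤ n := by omega
    rw [if_pos (show 1 ≤ g+1 ∧ g+1 ≤ n+1 by omega),
      if_pos (show 1 ≤ g ∧ g ≤ n by omega),
      if_neg (show ¬(g = 0) by omega),
      show (n + 1 - (g+1))/2 = (n-g)/2 by omega,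
      show n + 1 - 1 - (n-g)/2 = (n - 1 - (n-g)/2) + 1 by omega]
    rcases Nat.eq_zero_or_pos k with rfl | hk
    · rw [if_neg (show ¬(g ≤ n ∧ 1 ≤ 0) by omega)]
      simp
    · rw [if_pos (show g ≤ n ∧ 1 ≤ k by omega)]
      obtain ⟨k', rfl⟩ : ∃ k', k = k' + 1 := ⟨k - 1, by omega⟩
      rw [Nat.choose_succ_succ (n - 1 - (n-g)/2) k',
        show k' + 1 - 1 = k' by omega]
      ring

lemma step_tQpos (n g k : ℕ) :
    tQ (n+1) (g+1) k = (if k = 0 then 0 else tP n (g+2) (k-1)) + tQ n (g+2) k := by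
  rcases Nat.eq_zero_or_pos k with rfl | hk
  · rw [if_pos rfl, zero_add]
    unfold tQ
    rw [if_neg (show ¬(g+1 = 0) by omega), if_neg (show ¬(g+2 = 0) by omega),
      if_neg (show ¬(g+1 ≤ n+1 ∧ 1 ≤ 0) by omega),
      if_neg (show ¬(g+2 ≤ n ∧ 1 ≤ 0) by omega)]
  rw [if_neg (show ¬(k = 0) by omega)]
  obtain ⟨k', rfl⟩ : ∃ k', k = k' + 1 := ⟨k - 1, by omega⟩
  unfold tP tQ
  rw [if_neg (show ¬(g+1 = 0) by omega), if_neg (show ¬(g+2 = 0) by omega),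
    show k' + 1 - 1 = k' by omega]
  rcases Nat.lt_or_ge n (g+2) with hgn | hgn
  · -- g+2 > n : right side vanishes
    rw [if_neg (show ¬(1 ≤ g+2 ∧ g+2 ≤ n) by omega),
      if_neg (show ¬(g+2 ≤ n ∧ 1 ≤ k'+1) by omega)]
    rcases Nat.lt_or_ge (n+1) (g+1) with h2 | h2
    · rw [if_neg (show ¬(g+1 ≤ n+1 ∧ 1 ≤ k'+1) by omega)]
    · rw [if_pos (show g+1 ≤ n+1 ∧ 1 ≤ k'+1 by omega),
        show (n + 1 - (g+1))/2 = 0 by omega]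
      simp [Nat.choose_eq_zero_of_lt (show 0 < k'+1 by omega)]
  · -- g+2 ≤ n
    rw [if_pos (show 1 ≤ g+2 ∧ g+2 ≤ n by omega),
      if_pos (show g+2 ≤ n ∧ 1 ≤ k'+1 by omega),
      if_pos (show g+1 ≤ n+1 ∧ 1 ≤ k'+1 by omega),
      show (n + 1 - (g+1))/2 = (n - (g+2))/2 + 1 by omega,
      show n + 1 - 1 - ((n - (g+2))/2 + 1) = n - 1 - (n - (g+2))/2 by omega,
      Nat.choose_succ_succ ((n - (g+2))/2) k']
    ring

lemma step_tQ0 (n k : ℕ) :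
    tQ (n+1) 0 k = (tP n 0 k + tQ n 0 k)
      + ((if k = 0 then 0 else tP n 1 (k-1)) + tQ n 1 k) := by
  have htp0 : tP n 0 k = 0 := by unfold tP; rw [if_neg (by omega)]
  rw [htp0, zero_add]
  rcases Nat.eq_zero_or_pos k with rfl | hk
  · rw [if_pos rfl, zero_add]
    unfold tQ
    rw [if_pos (show (0:ℕ) = 0 from rfl), if_pos (show (0:ℕ) = 0 from rfl),
      if_neg (show ¬(1 = 0) by omega), if_neg (show ¬(1 ≤ n ∧ 1 ≤ 0) by omega)]
    simp only [Nat.choose_zero_right, mul_one, one_mul, add_zero]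
  rw [if_neg (show ¬(k = 0) by omega)]
  obtain ⟨k', rfl⟩ : ∃ k', k = k' + 1 := ⟨k - 1, by omega⟩
  rcases Nat.eq_zero_or_pos n with rfl | hn
  · unfold tP tQ
    rw [if_pos (show (0:ℕ) = 0 from rfl), if_pos (show (0:ℕ) = 0 from rfl),
      if_neg (show ¬(1 ≤ 1 ∧ 1 ≤ 0) by omega), if_neg (show ¬(1 = 0) by omega),
      if_neg (show ¬(1 ≤ 0 ∧ 1 ≤ k'+1) by omega)]
    simp [Nat.choose_eq_zero_of_lt (show 0 < k'+1 by omega)]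
  unfold tP tQ
  rw [if_pos (show (0:ℕ) = 0 from rfl), if_pos (show (0:ℕ) = 0 from rfl),
    if_neg (show ¬((1:ℕ) = 0) by omega),
    if_pos (show 1 ≤ 1 ∧ 1 ≤ n by omega),
    if_pos (show 1 ≤ n ∧ 1 ≤ k'+1 by omega),
    show k' + 1 - 1 = k' by omega]
  rcases Nat.even_or_odd n with ⟨m, hm⟩ | ⟨m, hm⟩
  · -- n even
    subst hm
    obtain ⟨m', rfl⟩ : ∃ m', m = m' + 1 := ⟨m - 1, by omega⟩
    rw [show (m' + 1 + (m' + 1) + 1 + 1)/2 = m' + 2 by omega,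
      show (m' + 1 + (m' + 1) + 1)/2 = m' + 1 by omega,
      show (m' + 1 + (m' + 1))/2 = m' + 1 by omega,
      show (m' + 1 + (m' + 1) - 1)/2 = m' by omega,
      show m' + 1 + (m' + 1) - 1 - m' = m' + 1 by omega,
      show m' + 2 = (m' + 1) + 1 from rfl,
      Nat.choose_succ_succ (m' + 1) k',
      Nat.choose_succ_succ m' k']
    ring
  · -- n odd
    subst hm
    rw [show (2 * m + 1 + 1 + 1)/2 = m + 1 by omega,
      show (2 * m + 1 + 1)/2 = m + 1 by omega,
      show (2 * m + 1)/2 = m by omega,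
      show (2 * m + 1 - 1)/2 = m by omega,
      show 2 * m + 1 - 1 - m = m by omega,
      Nat.choose_succ_succ m k']
    ring


theorem master (n : ℕ) : ∀ h k, PC n h k = tP n h k ∧ QC n h k = tQ n h k := by
  induction n with
  | zero =>
    intro h k
    rw [PC_zero, QC_zero, tP_zero, tQ_zero]
    exact ⟨rfl, rfl⟩
  | succ n ih =>
    intro h k
    constructor
    · cases h with
      | zero =>
        rw [recP0]
        unfold tP
        rw [if_neg (by omega)]
      | succ g =>
        rw [recP, (ih g k).1, (ih g k).2, step_tP]
    · cases h with
      | zero =>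
        rw [recQ0, (ih 0 k).1, (ih 0 k).2, (ih 1 k).2, step_tQ0]
        congr 2
        rcases Nat.eq_zero_or_pos k with rfl | hk
        · rw [if_pos rfl, if_pos rfl]
        · rw [if_neg (by omega), if_neg (by omega), (ih 1 (k-1)).1]
      | succ g =>
        rw [recQpos, (ih (g+2) k).2, step_tQpos]
        congr 1
        rcases Nat.eq_zero_or_pos k with rfl | hk
        · rw [if_pos rfl, if_pos rfl]
        · rw [if_neg (by omega), if_neg (by omega), (ih (g+2) (k-1)).1]

theorem word_count (n k : ℕ) :
    ((Finset.univ : Finset (Fin n → Fin 3)).filter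
      (fun w => Valid w ∧ Bal w ∧ (dSet w).card = k)).card =
    Nat.choose ((n + 1) / 2) k * Nat.choose (n / 2) k := by
  have hre : ((Finset.univ : Finset (Fin n → Fin 3)).filter
      (fun w => Valid w ∧ Bal w ∧ (dSet w).card = k))
      = (Finset.univ.filter (baseW n 0 k)) := by
    apply Finset.filter_congr
    intro w _
    unfold baseW Bal
    constructor
    · rintro ⟨hv, hb, hd⟩
      exact ⟨hv, by omega, hd⟩
    · rintro ⟨hv, hb, hd⟩
      exact ⟨hv, by omega, hd⟩
  rw [hre, ← PC_add_QC n 0 k, (master n 0 k).1, (master n 0 k).2]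
  unfold tP tQ
  rw [if_neg (by omega), if_pos rfl, zero_add]


end W321

/-- The number of 321-avoiding involutions of {1,…,n} with exactly k descents is
C(⌈n/2⌉,k)·C(⌊n/2⌋,k). -/
theorem descents_involutions_321 (n k : ℕ) (hn : 1 ≤ n) (hk : k < n) :
    ((Finset.univ : Finset (Equiv.Perm (Fin n))).filter
      (fun π => isInvolution π ∧ avoids321 π ∧ (desSet π).card = k)).card =
    Nat.choose ((n + 1) / 2) k * Nat.choose (n / 2) k := by
  rw [W321.cardA n k]
  exact W321.word_count n k
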